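/- Let Ḡ be a topological group, Γ̄ a compact open subgroup of Ḡ, G a dense subgroup of Ḡ, and Γ = G ∩ Γ̄. Then for every g ∈ G, [Γ : Γ ∩ gΓg⁻¹] = [Γ̄ : Γ̄ ∩ gΓ̄g⁻¹]; in particular, Γ and gΓg⁻¹ are commensurable subgroups of Ḡ. -/

import Mathlib

open Subgroup

private lemma relIndex_dense_aux {Gbar : Type*} [Group Gbar] [TopologicalSpace Gbar]
    [IsTopologicalGroup Gbar] (Γbar H G : Subgroup Gbar)
    (ho : IsOpen (Γbar : Set Gbar)) (hHo : IsOpen (H : Set Gbar))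
    (hd : Dense (G : Set Gbar)) :
    H.relIndex (G ⊓ Γbar) = H.relIndex Γbar := by
  rw [Subgroup.relIndex, Subgroup.relIndex, Subgroup.index_eq_card, Subgroup.index_eq_card]
  refine Nat.card_congr (Equiv.ofBijective
    (Quotient.map' (Subgroup.inclusion inf_le_right) ?_) ⟨?_, ?_⟩)
  · intro a b hab
    rw [QuotientGroup.leftRel_apply] at hab ⊢
    rw [Subgroup.mem_subgroupOf] at hab ⊢
    exact hab
  · intro a b hab
    induction a using Quotient.inductionOn'
    induction b using Quotient.inductionOn'
    rename_i a b
    simp only [Quotient.map'_mk''] at hab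
    refine Quotient.sound' ?_
    have := Quotient.exact' hab
    rw [QuotientGroup.leftRel_apply, Subgroup.mem_subgroupOf] at this ⊢
    exact this
  · intro x
    induction x using Quotient.inductionOn'
    rename_i x
    -- find γ ∈ G near x
    have hU : IsOpen ((Homeomorph.mulLeft (x : Gbar)) '' ((H : Set Gbar) ∩ Γbar)) :=
      (Homeomorph.mulLeft (x : Gbar)).isOpen_image.mpr (hHo.inter ho)
    have hne : ((Homeomorph.mulLeft (x : Gbar)) '' ((H : Set Gbar) ∩ Γbar)).Nonempty :=
      ⟨(x : Gbar), ⟨1, ⟨H.one_mem, Γbar.one_mem⟩, by simp⟩⟩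
    obtain ⟨γ, hγU, hγG⟩ := hd.inter_open_nonempty _ hU hne
    obtain ⟨k, ⟨hkH, hkΓ⟩, hk⟩ := hγU
    simp only [Homeomorph.coe_mulLeft] at hk
    have hγΓ : γ ∈ Γbar := hk ▸ Γbar.mul_mem x.2 hkΓ
    refine ⟨Quotient.mk'' ⟨γ, hγG, hγΓ⟩, ?_⟩
    simp only [Quotient.map'_mk'']
    refine Quotient.sound' ?_
    rw [QuotientGroup.leftRel_apply, Subgroup.mem_subgroupOf]
    show (((Subgroup.inclusion inf_le_right) ⟨γ, hγG, hγΓ⟩ : Γbar) : Gbar)⁻¹ * x ∈ H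
    have : (((Subgroup.inclusion (inf_le_right : G ⊓ Γbar ≤ Γbar)) ⟨γ, hγG, hγΓ⟩ : Γbar) : Gbar) = γ := rfl
    rw [this, ← hk]
    simpa using H.inv_mem hkH

private lemma conj_isOpen {Gbar : Type*} [Group Gbar] [TopologicalSpace Gbar]
    [IsTopologicalGroup Gbar] (g : Gbar) (Γbar : Subgroup Gbar)
    (ho : IsOpen (Γbar : Set Gbar)) :
    IsOpen ((Γbar.map (MulAut.conj g).toMonoidHom : Subgroup Gbar) : Set Gbar) := by
  have : ((Γbar.map (MulAut.conj g).toMonoidHom : Subgroup Gbar) : Set Gbar)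
      = ((Homeomorph.mulLeft g).trans (Homeomorph.mulRight g⁻¹)) '' Γbar := by
    ext x
    simp [Subgroup.mem_map, MulAut.conj, mul_assoc, eq_comm]
  rw [this]
  exact (Homeomorph.isOpen_image _).mpr ho

private lemma conj_map_self {Gbar : Type*} [Group Gbar] (G : Subgroup Gbar) {g : Gbar}
    (hg : g ∈ G) : G.map (MulAut.conj g).toMonoidHom = G := by
  ext x
  simp only [Subgroup.mem_map, MulAut.conj_apply, MulEquiv.coe_toMonoidHom]
  constructor
  · rintro ⟨y, hy, rfl⟩
    exact G.mul_mem (G.mul_mem hg hy) (G.inv_mem hg)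
  · intro hx
    exact ⟨g⁻¹ * x * g, G.mul_mem (G.mul_mem (G.inv_mem hg) hx) hg, by group⟩

private lemma main_eq {Gbar : Type*} [Group Gbar] [TopologicalSpace Gbar]
    [IsTopologicalGroup Gbar] (Γbar : Subgroup Gbar) (hc : IsCompact (Γbar : Set Gbar))
    (ho : IsOpen (Γbar : Set Gbar)) (G : Subgroup Gbar) (hd : Dense (G : Set Gbar))
    (g : Gbar) (hg : g ∈ G) :
    ((G ⊓ Γbar).map (MulAut.conj g).toMonoidHom).relIndex (G ⊓ Γbar) =
        (Γbar.map (MulAut.conj g).toMonoidHom).relIndex Γbar ∧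
      (Γbar.map (MulAut.conj g).toMonoidHom).relIndex Γbar ≠ 0 := by
  set c := (MulAut.conj g).toMonoidHom with hc'
  have hinj : Function.Injective c := (MulAut.conj g).injective
  set H := Γbar.map c with hH
  have hmap : (G ⊓ Γbar).map c = G ⊓ H := by
    rw [Subgroup.map_inf _ _ _ hinj, conj_map_self G hg]
  have hHo : IsOpen (H : Set Gbar) := conj_isOpen g Γbar ho
  have h1 : ((G ⊓ Γbar).map c).relIndex (G ⊓ Γbar) = H.relIndex (G ⊓ Γbar) := by
    rw [hmap, ← Subgroup.inf_relIndex_right (G ⊓ H), ← Subgroup.inf_relIndex_right H]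
    congr 1
    rw [inf_assoc]
    exact inf_eq_right.mpr (inf_le_right.trans inf_le_left)
  have h2 := relIndex_dense_aux Γbar H G ho hHo hd
  constructor
  · rw [h1, h2]
  · -- finiteness
    have hcs : CompactSpace Γbar := isCompact_iff_compactSpace.mp hc
    have hopen : IsOpen ((H.subgroupOf Γbar : Subgroup Γbar) : Set Γbar) := by
      have : ((H.subgroupOf Γbar : Subgroup Γbar) : Set Γbar)
          = (Subtype.val : Γbar → Gbar) ⁻¹' H := rfl
      rw [this]
      exact hHo.preimage continuous_subtype_val
    have : Finite (Γbar ⧸ H.subgroupOf Γbar) :=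
      Subgroup.quotient_finite_of_isOpen _ hopen
    exact Subgroup.index_ne_zero_of_finite

/-- Let `Γ̄` be a compact open subgroup of a topological group `Gbar`,
`G` a dense subgroup of `Gbar`, and `Γ = G ∩ Γ̄`. Then for every `g ∈ G`,
`[Γ : Γ ∩ gΓg⁻¹] = [Γ̄ : Γ̄ ∩ gΓ̄g⁻¹]`; in particular `Γ` and `gΓg⁻¹` are
commensurable. -/
theorem index_eq_of_dense_in_compact_open {Gbar : Type*} [Group Gbar] [TopologicalSpace Gbar]
    [IsTopologicalGroup Gbar] (Γbar : Subgroup Gbar) (hc : IsCompact (Γbar : Set Gbar))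
    (ho : IsOpen (Γbar : Set Gbar)) (G : Subgroup Gbar) (hd : Dense (G : Set Gbar))
    (g : Gbar) (hg : g ∈ G) :
    ((G ⊓ Γbar).map (MulAut.conj g).toMonoidHom).relIndex (G ⊓ Γbar) =
        (Γbar.map (MulAut.conj g).toMonoidHom).relIndex Γbar ∧
      Commensurable (G ⊓ Γbar) ((G ⊓ Γbar).map (MulAut.conj g).toMonoidHom) := by
  obtain ⟨heq, hne⟩ := main_eq Γbar hc ho G hd g hg
  obtain ⟨heq', hne'⟩ := main_eq Γbar hc ho G hd g⁻¹ (G.inv_mem hg)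
  refine ⟨heq, ?_, ?_⟩
  · -- (G ⊓ Γbar).relIndex ((G ⊓ Γbar).map (conj g)) ≠ 0
    have key : (G ⊓ Γbar).relIndex ((G ⊓ Γbar).map (MulAut.conj g).toMonoidHom)
        = ((G ⊓ Γbar).map (MulAut.conj g⁻¹).toMonoidHom).relIndex (G ⊓ Γbar) := by
      rw [← Subgroup.relIndex_comap (G ⊓ Γbar) (MulAut.conj g).toMonoidHom (G ⊓ Γbar)]
      congr 1
      ext x
      simp only [Subgroup.mem_comap, Subgroup.mem_map, MulEquiv.coe_toMonoidHom,
        MulAut.conj_apply]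
      constructor
      · intro h
        exact ⟨g * x * g⁻¹, h, by group⟩
      · rintro ⟨y, hy, rfl⟩
        convert hy using 1
        group
    rw [key, heq']
    exact hne'
  · rw [heq]
    exact hne
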